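/- Unambiguous state complexity of the upward-closed witness: for every n > 0, over the alphabet Σ_n = {a_1,…,a_n}, let E_n = {a a | a ∈ Σ_n}. Then every unambiguous finite automaton recognizing the upward closure ↑E_n (the set of all words over Σ_n in which some letter occurs at least twice) has at least 2^n + 1 states; in fact nU(↑E_n) = 2^n + 1. -/

import Mathlib

/-- An accepting run of an NFA on a word `w`: a sequence of `|w|+1` states starting
in an initial state, ending in an accepting state, and following the transitions. -/
def NFA.IsAcceptingRun {α σ : Type*} (M : NFA α σ) (w : List α)
    (r : Fin (w.length + 1) → σ) : Prop :=
  r 0 ∈ M.start ∧ r (Fin.last w.length) ∈ M.accept ∧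
    ∀ i : Fin w.length, r i.succ ∈ M.step (r i.castSucc) (w.get i)

/-- An NFA is unambiguous (a UFA) if every word has at most one accepting run. -/
def NFA.Unambiguous {α σ : Type*} (M : NFA α σ) : Prop :=
  ∀ (w : List α) (r₁ r₂ : Fin (w.length + 1) → σ),
    M.IsAcceptingRun w r₁ → M.IsAcceptingRun w r₂ → r₁ = r₂

/-- A deterministic NFA (a DFA with a possibly partial transition function):
exactly one initial state and at most one successor per state and letter. -/
def NFA.Deterministic {α σ : Type*} (M : NFA α σ) : Prop :=
  (∃ q₀, M.start = {q₀}) ∧ ∀ q a, (M.step q a).Subsingleton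

/-- Minimal number of states of an NFA recognizing `L` (`nN(L)`). -/
noncomputable def nN {α : Type} (L : Language α) : ℕ :=
  sInf {n | ∃ (σ : Type) (inst : Fintype σ) (M : NFA α σ),
    @Fintype.card σ inst = n ∧ M.accepts = L}

/-- Minimal number of states of a DFA (partial transition function allowed)
recognizing `L` (`nD(L)`). -/
noncomputable def nD {α : Type} (L : Language α) : ℕ :=
  sInf {n | ∃ (σ : Type) (inst : Fintype σ) (M : NFA α σ),
    M.Deterministic ∧ @Fintype.card σ inst = n ∧ M.accepts = L}

/-- Minimal number of states of an unambiguous NFA recognizing `L` (`nU(L)`). -/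
noncomputable def nU {α : Type} (L : Language α) : ℕ :=
  sInf {n | ∃ (σ : Type) (inst : Fintype σ) (M : NFA α σ),
    M.Unambiguous ∧ @Fintype.card σ inst = n ∧ M.accepts = L}

/-- Upward closure: all superwords (w.r.t. the scattered-subword ordering
`List.Sublist`) of words of `L`. -/
def upClosure {α : Type} (L : Language α) : Language α := {x | ∃ y ∈ L, y.Sublist x}

/-- Downward closure: all subwords of words of `L`. -/
def downClosure {α : Type} (L : Language α) : Language α := {x | ∃ y ∈ L, x.Sublist y}

/-- Upward interior: words all of whose superwords are in `L`. -/
def upInterior {α : Type} (L : Language α) : Language α := {x | ∀ y, x.Sublist y → y ∈ L}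

/-- Downward interior: words all of whose subwords are in `L`. -/
def downInterior {α : Type} (L : Language α) : Language α := {x | ∀ y, y.Sublist x → y ∈ L}

set_option linter.unusedSectionVars false

namespace UFAproof
variable {α : Type*} {σ : Type*}

/-- states reachable characterized by runs -/
theorem mem_evalFrom_iff_run (M : NFA α σ) (S : Set σ) (w : List α) (q : σ) :
    q ∈ M.evalFrom S w ↔ ∃ r : Fin (w.length + 1) → σ, r 0 ∈ S ∧
      (∀ i : Fin w.length, r i.succ ∈ M.step (r i.castSucc) (w.get i)) ∧
      r (Fin.last w.length) = q := by
  induction w generalizing S with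
  | nil =>
    simp only [NFA.evalFrom, List.foldl_nil]
    constructor
    · intro hq
      exact ⟨fun _ => q, hq, fun i => i.elim0, rfl⟩
    · rintro ⟨r, h0, _, hl⟩
      rw [show (Fin.last [].length) = 0 from rfl] at hl
      rwa [hl] at h0
  | cons a w ih =>
    have hev : M.evalFrom S (a :: w) = M.evalFrom (M.stepSet S a) w := rfl
    rw [hev, ih]
    constructor
    · rintro ⟨r', h0, hstep, hl⟩
      rw [M.mem_stepSet] at h0
      obtain ⟨p, hp, hp'⟩ := h0
      refine ⟨Fin.cases p r', ?_, ?_, ?_⟩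
      · show p ∈ S
        exact hp
      · intro i
        induction i using Fin.cases with
        | zero =>
          show Fin.cases p r' (Fin.succ 0) ∈ M.step (Fin.cases p r' 0) a
          rw [Fin.cases_succ, Fin.cases_zero]
          exact hp'
        | succ j =>
          show Fin.cases p r' (Fin.succ j.succ) ∈
            M.step (Fin.cases p r' (Fin.succ j.castSucc)) (w.get j)
          rw [Fin.cases_succ, Fin.cases_succ]
          exact hstep j
      · show Fin.cases p r' (Fin.succ (Fin.last w.length)) = q
        rw [Fin.cases_succ]
        exact hl
    · rintro ⟨r, h0, hstep, hl⟩
      refine ⟨fun i => r i.succ, ?_, ?_, ?_⟩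
      · rw [M.mem_stepSet]
        refine ⟨r 0, h0, ?_⟩
        exact hstep ⟨0, Nat.succ_pos _⟩
      · intro i
        show r (Fin.succ i.succ) ∈ M.step (r (Fin.succ i.castSucc)) (w.get i)
        have h2 : Fin.succ i.castSucc = Fin.castSucc i.succ := Fin.succ_castSucc i
        rw [h2]
        exact hstep i.succ
      · exact hl

theorem mem_accepts_iff_run (M : NFA α σ) (w : List α) :
    w ∈ M.accepts ↔ ∃ r : Fin (w.length + 1) → σ, M.IsAcceptingRun w r := by
  rw [NFA.mem_accepts]
  constructor
  · rintro ⟨q, hq, hmem⟩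
    rw [mem_evalFrom_iff_run] at hmem
    obtain ⟨r, h0, hstep, hl⟩ := hmem
    exact ⟨r, h0, hl ▸ hq, hstep⟩
  · rintro ⟨r, h0, hacc, hstep⟩
    exact ⟨r (Fin.last w.length), hacc, (mem_evalFrom_iff_run M _ w _).2 ⟨r, h0, hstep, rfl⟩⟩

/-- a run on `u` from the start set to `q` -/
def InitRun (M : NFA α σ) (u : List α) (q : σ) : Prop :=
  ∃ r : Fin (u.length + 1) → σ, r 0 ∈ M.start ∧
    (∀ i : Fin u.length, r i.succ ∈ M.step (r i.castSucc) (u.get i)) ∧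
    r (Fin.last u.length) = q

/-- a run on `v` from `q` to an accepting state -/
def FinRun (M : NFA α σ) (v : List α) (q : σ) : Prop :=
  ∃ r : Fin (v.length + 1) → σ, r 0 = q ∧
    (∀ i : Fin v.length, r i.succ ∈ M.step (r i.castSucc) (v.get i)) ∧
    r (Fin.last v.length) ∈ M.accept

theorem length_append_bound (u v : List α) : u.length < (u ++ v).length + 1 := by
  simp

theorem join_runs {M : NFA α σ} {u v : List α} {q : σ}
    (h1 : InitRun M u q) (h2 : FinRun M v q) :
    ∃ r : Fin ((u ++ v).length + 1) → σ, M.IsAcceptingRun (u ++ v) r ∧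
      r ⟨u.length, length_append_bound u v⟩ = q := by
  obtain ⟨r₁, h10, h1s, h1l⟩ := h1
  obtain ⟨r₂, h20, h2s, h2l⟩ := h2
  have hlen : (u ++ v).length = u.length + v.length := List.length_append
  refine ⟨fun i => if h : (i : ℕ) < u.length then r₁ ⟨i, by omega⟩
    else r₂ ⟨(i : ℕ) - u.length, by have := i.isLt; omega⟩, ?_, ?_⟩
  · refine ⟨?_, ?_, ?_⟩
    · -- start
      by_cases h : 0 < u.length
      · simpa [h] using h10
      · have hu : u.length = 0 := by omega
        beta_reduce; rw [dif_neg (by simp [hu])]; simp only [Fin.val_zero]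
        have : r₂ ⟨0 - u.length, by omega⟩ = q := by
          rw [show (⟨0 - u.length, by omega⟩ : Fin (v.length + 1)) = 0 from Fin.ext (by simp [hu])]
          exact h20
        rw [this, ← h1l]
        rw [show Fin.last u.length = 0 from Fin.ext (by simp [hu])] at h1l ⊢
        exact h10
    · -- accept
      have hval : ((Fin.last (u ++ v).length : Fin _) : ℕ) = u.length + v.length := by
        simp [hlen]
      simp only [hval]
      rw [dif_neg (by omega)]
      rw [show (⟨u.length + v.length - u.length, by omega⟩ : Fin (v.length + 1)) =
        Fin.last v.length from Fin.ext (by simp)]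
      exact h2l
    · -- transitions
      intro i
      have hi : (i : ℕ) < u.length + v.length := by have := i.isLt; omega
      have hisucc : ((i.succ : Fin ((u ++ v).length + 1)) : ℕ) = (i : ℕ) + 1 := rfl
      have hicast : ((i.castSucc : Fin ((u ++ v).length + 1)) : ℕ) = (i : ℕ) := rfl
      by_cases h : (i : ℕ) < u.length
      · -- within u
        have hget : (u ++ v).get i = u.get ⟨i, h⟩ := by
          rw [List.get_eq_getElem, List.get_eq_getElem]
          exact List.getElem_append_left h
        rw [hget]
        simp only [hisucc, hicast]
        rw [dif_pos h]
        by_cases h' : (i : ℕ) + 1 < u.length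
        · rw [dif_pos h']
          exact h1s ⟨i, h⟩
        · rw [dif_neg h']
          have he : (i : ℕ) + 1 = u.length := by omega
          have heq : r₂ ⟨(i : ℕ) + 1 - u.length, by omega⟩ = r₁ ⟨(i : ℕ) + 1, by omega⟩ := by
            rw [show (⟨(i : ℕ) + 1 - u.length, by omega⟩ : Fin (v.length + 1)) = 0 from
              Fin.ext (by simp [he])]
            rw [show (⟨(i : ℕ) + 1, by omega⟩ : Fin (u.length + 1)) = Fin.last u.length from
              Fin.ext (by simp [he])]
            rw [h20, h1l]
          rw [heq]
          exact h1s ⟨i, h⟩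
      · -- within v
        push_neg at h
        have hget : (u ++ v).get i = v.get ⟨(i : ℕ) - u.length, by omega⟩ := by
          rw [List.get_eq_getElem, List.get_eq_getElem]
          exact List.getElem_append_right h
        rw [hget]
        simp only [hisucc, hicast]
        rw [dif_neg (by omega), dif_neg (by omega)]
        have hstep2 := h2s ⟨(i : ℕ) - u.length, by omega⟩
        have e1 : (⟨(i : ℕ) - u.length, by omega⟩ : Fin v.length).succ
            = (⟨(i : ℕ) + 1 - u.length, by omega⟩ : Fin (v.length + 1)) :=
          Fin.ext (by simp [Fin.val_succ]; omega)
        have e2 : (⟨(i : ℕ) - u.length, by omega⟩ : Fin v.length).castSucc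
            = (⟨(i : ℕ) - u.length, by omega⟩ : Fin (v.length + 1)) :=
          Fin.ext (by simp)
        rw [e1, e2] at hstep2
        exact hstep2
  · simpa using h20

theorem split_run {M : NFA α σ} {u v : List α} {r : Fin ((u ++ v).length + 1) → σ}
    (h : M.IsAcceptingRun (u ++ v) r) :
    InitRun M u (r ⟨u.length, length_append_bound u v⟩) ∧
      FinRun M v (r ⟨u.length, length_append_bound u v⟩) := by
  obtain ⟨h0, hacc, hs⟩ := h
  have hlen : (u ++ v).length = u.length + v.length := List.length_append
  constructor
  · refine ⟨fun i => r ⟨(i : ℕ), by have := i.isLt; omega⟩, ?_, ?_, ?_⟩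
    · have e : (0 : Fin ((u ++ v).length + 1))
          = ⟨((0 : Fin (u.length + 1)) : ℕ), by omega⟩ := Fin.ext (by simp)
      rw [e] at h0
      exact h0
    · intro i
      have := hs ⟨(i : ℕ), by omega⟩
      have hget : (u ++ v).get ⟨(i : ℕ), by omega⟩ = u.get i := by
        rw [List.get_eq_getElem, List.get_eq_getElem]
        exact List.getElem_append_left i.isLt
      rw [hget] at this
      exact this
    · exact congrArg r (Fin.ext (by simp))
  · refine ⟨fun i => r ⟨u.length + (i : ℕ), by have := i.isLt; omega⟩, ?_, ?_, ?_⟩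
    · exact congrArg r (Fin.ext (by simp))
    · intro i
      have := hs ⟨u.length + (i : ℕ), by have := i.isLt; omega⟩
      have hget : (u ++ v).get ⟨u.length + (i : ℕ), by have := i.isLt; omega⟩ = v.get i := by
        rw [List.get_eq_getElem, List.get_eq_getElem,
          List.getElem_append_right (Nat.le_add_right u.length (i : ℕ))]
        simp
      rw [hget] at this
      exact this
    · have e : Fin.last ((u ++ v).length)
          = ⟨u.length + ((Fin.last v.length : Fin _) : ℕ), by simp [hlen]⟩ :=
        Fin.ext (by simp [hlen])
      rw [e] at hacc
      exact hacc


open Finset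

variable {β : Type*} [DecidableEq β] [Fintype β]

theorem sum_pow_neg_one_powerset (A : Finset β) :
    (∑ V ∈ A.powerset, (-1 : ℚ) ^ V.card) = if A = ∅ then 1 else 0 := by
  have := @Finset.sum_powerset_neg_one_pow_card β _ A
  have h2 : ((∑ m ∈ A.powerset, (-1 : ℤ) ^ m.card : ℤ) : ℚ)
      = ∑ m ∈ A.powerset, (-1 : ℚ) ^ m.card := by push_cast; rfl
  rw [← h2, this]
  split <;> norm_num

theorem sum_pow_neg_one_sdiff (A : Finset β) :
    (∑ V ∈ A.powerset, (-1 : ℚ) ^ (A \ V).card) = if A = ∅ then 1 else 0 := by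
  rw [← sum_pow_neg_one_powerset A]
  refine Finset.sum_nbij' (fun V => A \ V) (fun V => A \ V) ?_ ?_ ?_ ?_ ?_
  · intro V hV; simp only [mem_powerset] at *; exact sdiff_subset
  · intro V hV; simp only [mem_powerset] at *; exact sdiff_subset
  · intro V hV; simp only [mem_powerset] at hV; exact _root_.sdiff_sdiff_eq_self hV
  · intro V hV; simp only [mem_powerset] at hV; exact _root_.sdiff_sdiff_eq_self hV
  · intro V hV; rfl

theorem sum2 (S T : Finset β) :
    (∑ U : Finset β, (if S ⊆ U ∧ U ⊆ T then (-1 : ℚ) ^ ((T \ U).card) else 0))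
      = if S = T then 1 else 0 := by
  by_cases hST : S ⊆ T
  · rw [← Finset.sum_filter]
    have hfil : Finset.univ.filter (fun U => S ⊆ U ∧ U ⊆ T) = Finset.Icc S T := by
      ext U; simp [Finset.mem_Icc]
    rw [hfil]
    have hbij : (∑ U ∈ Finset.Icc S T, (-1 : ℚ) ^ ((T \ U).card))
        = ∑ V ∈ (T \ S).powerset, (-1 : ℚ) ^ (((T \ S) \ V).card) := by
      refine Finset.sum_nbij' (fun U => U \ S) (fun V => S ∪ V) ?_ ?_ ?_ ?_ ?_
      · intro U hU; rw [Finset.mem_Icc] at hU; rw [mem_powerset]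
        exact sdiff_le_sdiff hU.2 le_rfl
      · intro V hV; rw [mem_powerset] at hV; rw [Finset.mem_Icc]
        exact ⟨le_sup_left, sup_le hST (hV.trans sdiff_le)⟩
      · intro U hU; rw [Finset.mem_Icc] at hU
        exact Finset.union_sdiff_of_subset hU.1
      · intro V hV; rw [mem_powerset] at hV
        exact Finset.union_sdiff_cancel_left ((Finset.sdiff_disjoint.mono_left hV).symm)
      · intro U hU; rw [Finset.mem_Icc] at hU
        have hSU : ∀ {x}, x ∈ S → x ∈ U := fun h => hU.1 h
        have hset : (T \ S) \ (U \ S) = T \ U := by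
          ext x
          simp only [Finset.mem_sdiff]
          constructor
          · rintro ⟨⟨hT, hS⟩, hn⟩
            exact ⟨hT, fun hxU => hn ⟨hxU, hS⟩⟩
          · rintro ⟨hT, hU'⟩
            exact ⟨⟨hT, fun hS => hU' (hSU hS)⟩, fun h => hU' h.1⟩
        rw [hset]
    rw [hbij, sum_pow_neg_one_sdiff]
    have hiff : (T \ S = ∅) ↔ (S = T) := by
      rw [Finset.sdiff_eq_empty_iff_subset]
      exact ⟨fun h => le_antisymm hST h, fun h => le_of_eq h.symm⟩
    simp [hiff]
  · rw [if_neg (fun h => hST (le_of_eq h))]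
    apply Finset.sum_eq_zero
    intro U _
    rw [if_neg (fun h => hST (h.1.trans h.2))]

theorem sum1 (T : Finset β) :
    (∑ U : Finset β, (if U ⊆ T then (-1 : ℚ) ^ ((T \ U).card) else 0))
      = if T = ∅ then 1 else 0 := by
  have h := sum2 (∅ : Finset β) T
  simp only [Finset.empty_subset, true_and] at h
  rw [h]
  by_cases hT : T = ∅ <;> simp [hT, eq_comm]

/-- index type of the fooling matrix -/
abbrev Idx (n : ℕ) := Option (Finset (Fin n))

/-- the fooling matrix -/
def gmat (n : ℕ) : Matrix (Idx n) (Idx n) ℚ := fun i j =>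
  match i, j with
  | some S, some T => if S ⊆ T then 0 else 1
  | some _, none => 1
  | none, _ => 1

/-- its right inverse -/
def ginv (n : ℕ) : Matrix (Idx n) (Idx n) ℚ := fun i j =>
  match i, j with
  | some S, some T => if S ⊆ T then -(-1 : ℚ) ^ ((T \ S).card) else 0
  | some S, none => if S = Finset.univ then 1 else 0
  | none, some T => if T = ∅ then 1 else 0
  | none, none => 0

theorem gmat_mul_ginv (n : ℕ) : gmat n * ginv n = 1 := by
  ext i j
  rw [Matrix.mul_apply, Fintype.sum_option]
  match i, j with
  | none, none =>
    simp only [gmat, ginv, Matrix.one_apply_eq, one_mul, mul_zero, zero_add]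
    simp [Finset.sum_ite_eq']
  | none, some T =>
    simp only [gmat, ginv, one_mul]
    have : (∑ U : Finset (Fin n), (if U ⊆ T then -(-1 : ℚ) ^ ((T \ U).card) else 0))
        = -∑ U : Finset (Fin n), (if U ⊆ T then (-1 : ℚ) ^ ((T \ U).card) else 0) := by
      rw [← Finset.sum_neg_distrib]
      exact Finset.sum_congr rfl (fun U _ => by by_cases h : U ⊆ T <;> simp [h])
    rw [this, sum1]
    have : (1 : Matrix (Idx n) (Idx n) ℚ) none (some T) = 0 := by
      rw [Matrix.one_apply_ne]; simp
    rw [this]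
    ring
  | some S, none =>
    simp only [gmat, ginv, mul_zero, zero_add]
    have : ∀ U : Finset (Fin n), (if S ⊆ U then (0:ℚ) else 1) *
        (if U = Finset.univ then (1:ℚ) else 0)
        = if U = Finset.univ then (if S ⊆ U then (0:ℚ) else 1) else 0 := by
      intro U; by_cases h : U = Finset.univ <;> simp [h]
    rw [Finset.sum_congr rfl (fun U _ => this U)]
    rw [Finset.sum_ite_eq' Finset.univ Finset.univ
      (fun U => if S ⊆ U then (0:ℚ) else 1)]
    have : (1 : Matrix (Idx n) (Idx n) ℚ) (some S) none = 0 := by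
      rw [Matrix.one_apply_ne]; simp
    rw [this]
    simp [Finset.subset_univ]
  | some S, some T =>
    simp only [gmat, ginv, one_mul]
    have key : ∀ U : Finset (Fin n), (if S ⊆ U then (0:ℚ) else 1) *
        (if U ⊆ T then -(-1 : ℚ) ^ ((T \ U).card) else 0)
        = (if S ⊆ U ∧ U ⊆ T then (-1 : ℚ) ^ ((T \ U).card) else 0)
          - (if U ⊆ T then (-1 : ℚ) ^ ((T \ U).card) else 0) := by
      intro U
      by_cases h1 : S ⊆ U <;> by_cases h2 : U ⊆ T <;> simp [h1, h2]
    rw [Finset.sum_congr rfl (fun U _ => key U), Finset.sum_sub_distrib, sum2, sum1]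
    have : (1 : Matrix (Idx n) (Idx n) ℚ) (some S) (some T)
        = if S = T then 1 else 0 := by
      by_cases h : S = T
      · rw [h]; simp
      · rw [Matrix.one_apply_ne (by simpa using h)]; simp [h]
    rw [this]
    ring


open Finset in
theorem initFin_unique {M : NFA α σ} (hM : M.Unambiguous) {u v : List α} {q q' : σ}
    (h1 : InitRun M u q) (h2 : FinRun M v q) (h1' : InitRun M u q') (h2' : FinRun M v q') :
    q = q' := by
  obtain ⟨r, hr, hrq⟩ := join_runs h1 h2
  obtain ⟨r', hr', hrq'⟩ := join_runs h1' h2'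
  have := hM (u ++ v) r r' hr hr'
  rw [← hrq, ← hrq', this]

open Classical in
theorem sum_indicator (M : NFA α σ) [Fintype σ] (hM : M.Unambiguous) (u v : List α) :
    (∑ q : σ, (if InitRun M u q then (1:ℚ) else 0) * (if FinRun M v q then (1:ℚ) else 0))
      = if (u ++ v) ∈ M.accepts then 1 else 0 := by
  by_cases hin : (u ++ v) ∈ M.accepts
  · rw [if_pos hin]
    obtain ⟨r, hr⟩ := (mem_accepts_iff_run M _).1 hin
    set q0 := r ⟨u.length, length_append_bound u v⟩ with hq0
    obtain ⟨hi, hf⟩ := split_run hr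
    have key : ∀ q : σ, ((if InitRun M u q then (1:ℚ) else 0) *
        (if FinRun M v q then (1:ℚ) else 0)) = if q = q0 then 1 else 0 := by
      intro q
      by_cases h1 : InitRun M u q
      · by_cases h2 : FinRun M v q
        · rw [if_pos h1, if_pos h2, if_pos (initFin_unique hM h1 h2 hi hf), one_mul]
        · rw [if_neg h2, mul_zero, if_neg (fun h => h2 (by rw [h]; exact hf))]
      · rw [if_neg h1, zero_mul, if_neg (fun h => h1 (by rw [h]; exact hi))]
    rw [Finset.sum_congr rfl (fun q _ => key q)]
    simp [Finset.sum_ite_eq']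
  · rw [if_neg hin]
    apply Finset.sum_eq_zero
    intro q _
    by_cases h1 : InitRun M u q
    · by_cases h2 : FinRun M v q
      · exact absurd ((mem_accepts_iff_run M _).2
          ⟨_, (join_runs h1 h2).choose_spec.1⟩) hin
      · rw [if_neg h2, mul_zero]
    · rw [if_neg h1, zero_mul]

/-! words indexed by `Idx n` -/

def wordOf {n : ℕ} (S : Finset (Fin n)) : List (Fin n) := S.sort (· ≤ ·)

def uWord (n : ℕ) (hn : 0 < n) : Idx n → List (Fin n)
  | some S => wordOf S
  | none => [⟨0, hn⟩, ⟨0, hn⟩]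

def vWord (n : ℕ) (hn : 0 < n) : Idx n → List (Fin n)
  | some T => wordOf Tᶜ
  | none => [⟨0, hn⟩, ⟨0, hn⟩]

theorem nodup_append_iff {n : ℕ} (S T : Finset (Fin n)) :
    (wordOf S ++ wordOf Tᶜ).Nodup ↔ S ⊆ T := by
  rw [List.nodup_append]
  simp only [wordOf, Finset.sort_nodup, true_and]
  constructor
  · intro h a ha
    by_contra hT
    exact h _ ((Finset.mem_sort _).2 ha) _ ((Finset.mem_sort _).2 (Finset.mem_compl.2 hT)) rfl
  · intro h a ha ha'
    exact fun hb hab => Finset.mem_compl.1 ((Finset.mem_sort _).1 hb) (hab ▸ h ((Finset.mem_sort _).1 ha))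

theorem word_mem (n : ℕ) (hn : 0 < n) (i j : Idx n) :
    (if ¬ (uWord n hn i ++ vWord n hn j).Nodup then (1:ℚ) else 0) = gmat n i j := by
  match i, j with
  | none, j =>
    rw [if_pos, gmat]
    intro h
    have := h.of_append_left
    simp [uWord] at this
  | some S, none =>
    rw [if_pos, gmat]
    intro h
    have := h.of_append_right
    simp [vWord] at this
  | some S, some T =>
    show _ = if S ⊆ T then (0:ℚ) else 1
    have := nodup_append_iff S T
    by_cases h : S ⊆ T
    · rw [if_pos h, if_neg]
      simp only [uWord, vWord]
      exact fun hc => hc (this.2 h)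
    · rw [if_neg h, if_pos]
      simp only [uWord, vWord]
      exact fun hc => h (this.1 hc)

open Classical in
theorem lower_bound {n : ℕ} (hn : 0 < n) {σ : Type*} [Fintype σ] (M : NFA (Fin n) σ)
    (hU : M.Unambiguous) (hL : ∀ x : List (Fin n), x ∈ M.accepts ↔ ¬ x.Nodup) :
    2 ^ n + 1 ≤ Fintype.card σ := by
  let A : Matrix (Idx n) σ ℚ := fun i q => if InitRun M (uWord n hn i) q then 1 else 0
  let B : Matrix σ (Idx n) ℚ := fun q j => if FinRun M (vWord n hn j) q then 1 else 0
  have hAB : A * B = gmat n := by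
    ext i j
    rw [Matrix.mul_apply]
    have h1 : (∑ q : σ, A i q * B q j) = ∑ q : σ,
        (if InitRun M (uWord n hn i) q then (1:ℚ) else 0) *
        (if FinRun M (vWord n hn j) q then (1:ℚ) else 0) := rfl
    rw [h1, sum_indicator M hU]
    rw [← word_mem n hn i j]
    by_cases h : (uWord n hn i ++ vWord n hn j).Nodup
    · rw [if_neg (fun hc => ((hL _).1 hc) h), if_neg (by simpa using h)]
    · rw [if_pos ((hL _).2 h), if_pos h]
  have hrank : (gmat n).rank = 2 ^ n + 1 := by
    rw [Matrix.rank_of_isUnit _ ((Matrix.isUnit_iff_isUnit_det _).2 (Matrix.isUnit_det_of_right_inverse (B := ginv n)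
      (gmat_mul_ginv n)))]
    simp
  calc 2 ^ n + 1 = (gmat n).rank := hrank.symm
    _ = (A * B).rank := by rw [hAB]
    _ ≤ A.rank := Matrix.rank_mul_le_left A B
    _ ≤ Fintype.card σ := Matrix.rank_le_card_width A



/-- transition function of the minimal UFA -/
def nextState (n : ℕ) : Idx n → Fin n → Idx n
  | none, _ => none
  | some S, a => if a ∈ S then none else some (insert a S)

/-- the minimal UFA: tracks the set of seen letters, `none` = duplicate seen -/
def upperNFA (n : ℕ) : NFA (Fin n) (Idx n) where
  step q a := {nextState n q a}
  start := {some ∅}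
  accept := {none}

theorem upperNFA_unambiguous (n : ℕ) : (upperNFA n).Unambiguous := by
  intro w r₁ r₂ h1 h2
  funext i
  induction i using Fin.induction with
  | zero =>
    have e1 : r₁ 0 ∈ ({some ∅} : Set (Idx n)) := h1.1
    have e2 : r₂ 0 ∈ ({some ∅} : Set (Idx n)) := h2.1
    rw [Set.mem_singleton_iff] at e1 e2
    rw [e1, e2]
  | succ i ih =>
    have e1 := h1.2.2 i
    have e2 := h2.2.2 i
    simp only [upperNFA, Set.mem_singleton_iff] at e1 e2
    rw [e1, e2, ih]

theorem foldl_none (n : ℕ) (w : List (Fin n)) : w.foldl (nextState n) none = none := by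
  induction w with
  | nil => rfl
  | cons a w ih => rw [List.foldl_cons]; exact ih

theorem evalFrom_eq (n : ℕ) (q : Idx n) (w : List (Fin n)) :
    (upperNFA n).evalFrom {q} w = {w.foldl (nextState n) q} := by
  induction w generalizing q with
  | nil => rfl
  | cons a w ih =>
    have h1 : (upperNFA n).evalFrom {q} (a :: w)
        = (upperNFA n).evalFrom ((upperNFA n).stepSet {q} a) w := rfl
    rw [h1]
    have hss : (upperNFA n).stepSet {q} a = {nextState n q a} := by
      simp [NFA.stepSet, upperNFA]
    rw [hss, ih]
    rfl

theorem foldl_eq_none_iff (n : ℕ) (w : List (Fin n)) (S : Finset (Fin n)) :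
    w.foldl (nextState n) (some S) = none ↔ ¬ (w.Nodup ∧ ∀ a ∈ w, a ∉ S) := by
  induction w generalizing S with
  | nil => simp
  | cons a w ih =>
    rw [List.foldl_cons]
    by_cases h : a ∈ S
    · have : nextState n (some S) a = none := by simp [nextState, h]
      rw [this, foldl_none]
      simp only [true_iff]
      exact fun hc => hc.2 a List.mem_cons_self h
    · have : nextState n (some S) a = some (insert a S) := by simp [nextState, h]
      rw [this, ih]
      apply not_congr
      constructor
      · rintro ⟨hN, hb⟩
        have haw : a ∉ w := fun hin => hb a hin (Finset.mem_insert_self a S)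
        refine ⟨List.nodup_cons.2 ⟨haw, hN⟩, ?_⟩
        intro b hbmem
        rcases List.mem_cons.1 hbmem with rfl | hbw
        · exact h
        · exact fun hbS => hb b hbw (Finset.mem_insert_of_mem hbS)
      · rintro ⟨hN, hb⟩
        rw [List.nodup_cons] at hN
        refine ⟨hN.2, ?_⟩
        intro b hbw hbi
        rcases Finset.mem_insert.1 hbi with rfl | hbS
        · exact hN.1 hbw
        · exact hb b (List.mem_cons_of_mem a hbw) hbS

theorem upperNFA_accepts (n : ℕ) (w : List (Fin n)) :
    w ∈ (upperNFA n).accepts ↔ ¬ w.Nodup := by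
  rw [NFA.mem_accepts]
  have hstart : (upperNFA n).start = {some ∅} := rfl
  constructor
  · rintro ⟨q, hq, hmem⟩
    rw [hstart, evalFrom_eq, Set.mem_singleton_iff] at hmem
    have hqn : q = none := Set.mem_singleton_iff.1 hq
    rw [hqn] at hmem
    have := (foldl_eq_none_iff n w ∅).1 hmem.symm
    intro hd
    exact this ⟨hd, by simp⟩
  · intro h
    refine ⟨none, rfl, ?_⟩
    rw [hstart, evalFrom_eq, Set.mem_singleton_iff]
    exact ((foldl_eq_none_iff n w ∅).2 (fun hc => h hc.1)).symm

theorem card_Idx (n : ℕ) : Fintype.card (Idx n) = 2 ^ n + 1 := by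
  simp

end UFAproof

/-- Unambiguous state complexity of the upward-closed witness: over `Σ_n = Fin n`
(`n > 0`), with `E_n = { aa | a ∈ Σ_n }`, every unambiguous automaton recognizing
`↑E_n` has at least `2^n + 1` states; in fact `nU(↑E_n) = 2^n + 1`. -/
theorem nU_upClosure_E (n : ℕ) (hn : 0 < n) (E : Language (Fin n))
    (hE : E = {w | ∃ a : Fin n, w = [a, a]}) :
    (∀ (σ : Type) [Fintype σ] (M : NFA (Fin n) σ),
      M.Unambiguous → M.accepts = upClosure E → 2 ^ n + 1 ≤ Fintype.card σ) ∧
    nU (upClosure E) = 2 ^ n + 1 := by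
  classical
  have hup : upClosure E = {x : List (Fin n) | ¬ x.Nodup} := by
    ext x
    simp only [upClosure, hE, Set.mem_setOf_eq]
    constructor
    · rintro ⟨y, ⟨a, rfl⟩, hs⟩ hn
      exact (List.nodup_iff_sublist.1 hn a) hs
    · intro h
      have h' : ¬ x.Nodup := h
      rw [List.nodup_iff_sublist] at h'
      push_neg at h'
      obtain ⟨a, ha⟩ := h'
      exact ⟨[a, a], ⟨a, rfl⟩, ha⟩
  have part1 : ∀ (σ : Type) [Fintype σ] (M : NFA (Fin n) σ),
      M.Unambiguous → M.accepts = upClosure E → 2 ^ n + 1 ≤ Fintype.card σ := by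
    intro σ _ M hU hacc
    refine UFAproof.lower_bound hn M hU ?_
    intro x
    rw [hacc, hup]
    rfl
  refine ⟨part1, ?_⟩
  have hmem : 2 ^ n + 1 ∈ {m | ∃ (σ : Type) (inst : Fintype σ) (M : NFA (Fin n) σ),
      M.Unambiguous ∧ @Fintype.card σ inst = m ∧ M.accepts = upClosure E} := by
    refine ⟨UFAproof.Idx n, inferInstance, UFAproof.upperNFA n,
      UFAproof.upperNFA_unambiguous n, UFAproof.card_Idx n, ?_⟩
    ext x
    rw [hup]
    exact UFAproof.upperNFA_accepts n x
  have hne : Set.Nonempty {m | ∃ (σ : Type) (inst : Fintype σ) (M : NFA (Fin n) σ),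
      M.Unambiguous ∧ @Fintype.card σ inst = m ∧ M.accepts = upClosure E} := ⟨_, hmem⟩
  rw [nU]
  apply le_antisymm
  · exact Nat.sInf_le hmem
  · obtain ⟨σ', inst', M', hU', hcard', hacc'⟩ := Nat.sInf_mem hne
    rw [← hcard']
    exact @part1 σ' inst' M' hU' hacc'
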